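/- The coinvariant algebra of the symmetric group S_n, namely the quotient of the polynomial ring ℂ[x_1, ..., x_n] by the ideal generated by the elementary symmetric polynomials e_1, ..., e_n, has ℂ-dimension n!. -/

import Mathlib

open Polynomial

noncomputable def vprod (m : ℕ) (A : Type) [CommRing A] : Polynomial (MvPolynomial (Fin m) A) :=
  ∏ j : Fin m, (Polynomial.X - Polynomial.C (MvPolynomial.X j))

noncomputable def Jid (m : ℕ) (A : Type) [CommRing A] (f : Polynomial A) :
    Ideal (MvPolynomial (Fin m) A) :=
  Ideal.span (Set.range fun k : ℕ => (vprod m A - f.map MvPolynomial.C).coeff k)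

lemma map_vprod {m : ℕ} {A B : Type} [CommRing A] [CommRing B]
    (ψ : MvPolynomial (Fin m) A →+* B) :
    (vprod m A).map ψ = ∏ j : Fin m, (Polynomial.X - Polynomial.C (ψ (MvPolynomial.X j))) := by
  simp [vprod, Polynomial.map_prod]

lemma ker_cond {m : ℕ} {A B : Type} [CommRing A] [CommRing B] {f : Polynomial A}
    {ψ : MvPolynomial (Fin m) A →+* B} :
    (∀ k, ψ ((vprod m A - f.map MvPolynomial.C).coeff k) = 0) ↔
    (∏ j : Fin m, (Polynomial.X - Polynomial.C (ψ (MvPolynomial.X j)))) =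
      f.map (ψ.comp MvPolynomial.C) := by
  have h1 : ∀ k, ψ ((vprod m A - f.map MvPolynomial.C).coeff k)
      = ((vprod m A - f.map MvPolynomial.C).map ψ).coeff k := fun k =>
    (Polynomial.coeff_map ψ k).symm
  simp_rw [h1]
  constructor
  · intro h
    have h2 : (vprod m A - f.map MvPolynomial.C).map ψ = 0 := Polynomial.ext fun k => h k
    rw [Polynomial.map_sub, sub_eq_zero, map_vprod, Polynomial.map_map] at h2
    exact h2
  · intro h k
    have h2 : (vprod m A - f.map MvPolynomial.C).map ψ = 0 := by
      rw [Polynomial.map_sub, sub_eq_zero, map_vprod, Polynomial.map_map]; exact h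
    rw [h2]; simp

lemma Jid_le_ker_iff {m : ℕ} {A B : Type} [CommRing A] [CommRing B] {f : Polynomial A}
    {ψ : MvPolynomial (Fin m) A →+* B} :
    Jid m A f ≤ RingHom.ker ψ ↔
    (∏ j : Fin m, (Polynomial.X - Polynomial.C (ψ (MvPolynomial.X j)))) =
      f.map (ψ.comp MvPolynomial.C) := by
  rw [Jid, Ideal.span_le, Set.range_subset_iff, ← ker_cond]
  simp [RingHom.mem_ker]

lemma prod_eq_map {m : ℕ} {A : Type} [CommRing A] (f : Polynomial A) :
    (∏ j : Fin m, (Polynomial.X - Polynomial.C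
        ((Ideal.Quotient.mk (Jid m A f)) (MvPolynomial.X j)))) =
      f.map ((Ideal.Quotient.mk (Jid m A f)).comp MvPolynomial.C) := by
  rw [← Jid_le_ker_iff]
  intro x hx
  simpa [RingHom.mem_ker, Ideal.Quotient.eq_zero_iff_mem] using hx

theorem key : ∀ (m : ℕ) (A : Type) [CommRing A] (f : Polynomial A), f.Monic →
    f.natDegree = m →
    Nonempty (Module.Basis (Fin (Nat.factorial m)) A (MvPolynomial (Fin m) A ⧸ Jid m A f)) := by
  intro m
  induction m with
  | zero =>
    intro A _ f hf hd
    have hf1 : f = 1 := (Polynomial.Monic.natDegree_eq_zero hf).mp hd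
    have hJ : Jid 0 A f = ⊥ := by
      rw [Jid, hf1]
      have h0 : (vprod 0 A - (1 : Polynomial A).map MvPolynomial.C) = 0 := by
        simp [vprod]
      rw [h0]
      simp
    have hinj : Function.Injective (Ideal.Quotient.mkₐ A (Jid 0 A f)) := by
      intro a b h
      have := Ideal.Quotient.eq.mp h
      rw [hJ] at this
      simpa [sub_eq_zero] using this
    let e : (MvPolynomial (Fin 0) A ⧸ Jid 0 A f) ≃ₐ[A] A :=
      ((AlgEquiv.ofBijective (Ideal.Quotient.mkₐ A (Jid 0 A f))
        ⟨hinj, Ideal.Quotient.mk_surjective⟩).symm).trans (MvPolynomial.isEmptyAlgEquiv A (Fin 0))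
    exact ⟨(Module.Basis.singleton (Fin 1) A).map e.symm.toLinearEquiv⟩
  | succ m ih =>
    intro A _ f hf hd
    have hntA : Nontrivial A := by
      rcases subsingleton_or_nontrivial A with h | h
      · exfalso
        have hf0 : f = 0 := Subsingleton.elim _ _
        rw [hf0] at hd; simp at hd
      · exact h
    let A' := AdjoinRoot f
    let pb : PowerBasis A A' := AdjoinRoot.powerBasis' hf
    have hdim : pb.dim = m + 1 := hd
    have hntA' : Nontrivial A' := by
      have hdpos : 0 < pb.dim := by omega
      exact nontrivial_of_ne (pb.basis ⟨0, hdpos⟩) 0 (pb.basis.ne_zero _)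
    let r : A' := AdjoinRoot.root f
    let fA' : Polynomial A' := f.map (algebraMap A A')
    have hfA'monic : fA'.Monic := hf.map _
    have hroot : fA'.eval r = 0 := by
      rw [eval_map]; exact AdjoinRoot.eval₂_root f
    let g : Polynomial A' := fA' /ₘ (X - C r)
    have hfactor : fA' = (X - C r) * g := by
      conv_lhs => rw [← Polynomial.modByMonic_add_div fA' (X - C r)]
      rw [Polynomial.modByMonic_X_sub_C_eq_C_eval, hroot, map_zero, zero_add]
    have hgmonic : g.Monic := (monic_X_sub_C r).of_mul_monic_left (hfactor ▸ hfA'monic)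
    have hgdeg : g.natDegree = m := by
      have h1 : fA'.natDegree = m + 1 := by rw [hf.natDegree_map]; exact hd
      show (fA' /ₘ (X - C r)).natDegree = m
      rw [Polynomial.natDegree_divByMonic _ (monic_X_sub_C r), h1, natDegree_X_sub_C]
      omega
    obtain ⟨bIH⟩ := ih A' g hgmonic hgdeg
    let mkf : MvPolynomial (Fin (m+1)) A →+* (MvPolynomial (Fin (m+1)) A ⧸ Jid (m+1) A f) :=
      Ideal.Quotient.mk _
    let mk' : MvPolynomial (Fin m) A' →+* (MvPolynomial (Fin m) A' ⧸ Jid m A' g) :=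
      Ideal.Quotient.mk _
    set Qf := MvPolynomial (Fin (m+1)) A ⧸ Jid (m+1) A f with hQf
    set Q' := MvPolynomial (Fin m) A' ⧸ Jid m A' g with hQ'
    let b0 : Qf := mkf (MvPolynomial.X 0)
    -- algebraMap facts
    have halgf : (algebraMap A Qf) = mkf.comp MvPolynomial.C := rfl
    have halg' : (algebraMap A' Q') = mk'.comp MvPolynomial.C := rfl
    have hb0 : Polynomial.aeval b0 f = 0 := by
      rw [Polynomial.aeval_def, ← Polynomial.eval_map, halgf, ← prod_eq_map f]
      rw [Polynomial.eval_prod]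
      apply Finset.prod_eq_zero (Finset.mem_univ (0 : Fin (m+1)))
      simp [b0, mkf]
    let ρ : A' →ₐ[A] Qf := AdjoinRoot.liftAlgHom f (Algebra.ofId A Qf) b0 hb0
    have hρr : ρ r = b0 := by
      exact AdjoinRoot.liftAlgHom_root _ _ _ _
    -- Φ
    let v : Fin (m+1) → Q' := Fin.cases (algebraMap A' Q' r) (fun i => mk' (MvPolynomial.X i))
    let φ0 : MvPolynomial (Fin (m+1)) A →ₐ[A] Q' := MvPolynomial.aeval v
    have hkerφ : Jid (m+1) A f ≤ RingHom.ker φ0.toRingHom := by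
      rw [Jid_le_ker_iff]
      have hc : φ0.toRingHom.comp MvPolynomial.C = algebraMap A Q' := by
        ext a; simp [φ0]
      rw [hc]
      have hXj : ∀ j, φ0.toRingHom (MvPolynomial.X j) = v j := fun j => MvPolynomial.aeval_X v j
      simp_rw [hXj]
      rw [Fin.prod_univ_succ]
      have h2 : (∏ i : Fin m, (Polynomial.X - Polynomial.C (v i.succ)))
          = g.map (algebraMap A' Q') := by
        have h := prod_eq_map (m := m) g
        rw [halg', ← h]
        apply Finset.prod_congr rfl
        intro i _
        rw [show v i.succ = mk' (MvPolynomial.X i) from by simp [v]]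
      rw [h2]
      show (Polynomial.X - Polynomial.C (algebraMap A' Q' r)) * _ = _
      rw [show Polynomial.C (algebraMap A' Q' r) = Polynomial.map (algebraMap A' Q') (Polynomial.C r) by simp,
        show (Polynomial.X : Polynomial Q') = Polynomial.map (algebraMap A' Q') Polynomial.X by simp,
        ← Polynomial.map_sub, ← Polynomial.map_mul, ← hfactor]
      rw [Polynomial.map_map, ← IsScalarTower.algebraMap_eq]
    let Φ : Qf →ₐ[A] Q' := Ideal.Quotient.liftₐ _ φ0 (fun a ha => hkerφ ha)
    have hΦmk : ∀ p, Φ (mkf p) = φ0 p := fun p => rfl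
    -- Ψ
    let ψ0 : MvPolynomial (Fin m) A' →+* Qf :=
      MvPolynomial.eval₂Hom ρ.toRingHom (fun i => mkf (MvPolynomial.X i.succ))
    have hkerψ : Jid m A' g ≤ RingHom.ker ψ0 := by
      rw [Jid_le_ker_iff]
      have hc : ψ0.comp MvPolynomial.C = ρ.toRingHom := by
        apply RingHom.ext; intro a; simp [ψ0]
      rw [hc]
      have hXi : ∀ i : Fin m, ψ0 (MvPolynomial.X i) = mkf (MvPolynomial.X i.succ) := by
        intro i; simp [ψ0]
      simp_rw [hXi]
      have hreg := (monic_X_sub_C b0).isRegular.left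
      apply hreg
      show (Polynomial.X - Polynomial.C b0) * _ = (Polynomial.X - Polynomial.C b0) * _
      have lhs1 : (Polynomial.X - Polynomial.C b0) *
          (∏ i : Fin m, (Polynomial.X - Polynomial.C (mkf (MvPolynomial.X i.succ))))
          = f.map (mkf.comp MvPolynomial.C) := by
        rw [← prod_eq_map f, Fin.prod_univ_succ]
      rw [lhs1]
      have rhs1 : (Polynomial.X - Polynomial.C b0) * g.map ρ.toRingHom
          = f.map (mkf.comp MvPolynomial.C) := by
        rw [← hρr]
        rw [show Polynomial.C (ρ r) = Polynomial.map ρ.toRingHom (Polynomial.C r) by simp,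
          show (Polynomial.X : Polynomial Qf) = Polynomial.map ρ.toRingHom Polynomial.X by simp,
          ← Polynomial.map_sub, ← Polynomial.map_mul, ← hfactor]
        rw [Polynomial.map_map]
        congr 1
        apply RingHom.ext
        intro a
        show ρ (algebraMap A A' a) = mkf (MvPolynomial.C a)
        rw [AlgHom.commutes]
        rfl
      rw [rhs1]
    let Ψ : Q' →+* Qf := Ideal.Quotient.lift _ ψ0 (fun a ha => hkerψ ha)
    have hΨmk : ∀ p, Ψ (mk' p) = ψ0 p := fun p => rfl
    -- composite 1 : Ψ ∘ Φ = id
    have comp1 : Ψ.comp Φ.toRingHom = RingHom.id Qf := by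
      apply Ideal.Quotient.ringHom_ext
      apply MvPolynomial.ringHom_ext
      · intro a
        simp only [RingHom.comp_apply, RingHom.id_apply]
        show Ψ (Φ (mkf (MvPolynomial.C a))) = mkf (MvPolynomial.C a)
        rw [hΦmk]
        have : φ0 (MvPolynomial.C a) = algebraMap A Q' a := by simp [φ0]
        rw [this]
        have h2 : (algebraMap A Q' a) = mk' (MvPolynomial.C (algebraMap A A' a)) := by
          rw [IsScalarTower.algebraMap_apply A A' Q', halg']; rfl
        rw [h2, hΨmk]
        have h3 : ψ0 (MvPolynomial.C (algebraMap A A' a)) = ρ (algebraMap A A' a) := by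
          simp [ψ0]
        rw [h3, ρ.commutes, halgf]; rfl
      · intro j
        simp only [RingHom.comp_apply, RingHom.id_apply]
        show Ψ (Φ (mkf (MvPolynomial.X j))) = mkf (MvPolynomial.X j)
        rw [hΦmk]
        have : φ0 (MvPolynomial.X j) = v j := MvPolynomial.aeval_X v j
        rw [this]
        induction j using Fin.cases with
        | zero =>
          show Ψ (algebraMap A' Q' r) = b0
          rw [halg']
          show Ψ (mk' (MvPolynomial.C r)) = b0
          rw [hΨmk]
          have : ψ0 (MvPolynomial.C r) = ρ r := by simp [ψ0]
          rw [this, hρr]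
        | succ i =>
          show Ψ (mk' (MvPolynomial.X i)) = mkf (MvPolynomial.X i.succ)
          rw [hΨmk]
          simp [ψ0]
    -- composite 2 : Φ ∘ Ψ = id
    have comp2 : Φ.toRingHom.comp Ψ = RingHom.id Q' := by
      apply Ideal.Quotient.ringHom_ext
      apply MvPolynomial.ringHom_ext
      · intro a'
        simp only [RingHom.comp_apply, RingHom.id_apply]
        show Φ (Ψ (mk' (MvPolynomial.C a'))) = mk' (MvPolynomial.C a')
        rw [hΨmk]
        have h3 : ψ0 (MvPolynomial.C a') = ρ a' := by simp [ψ0]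
        rw [h3]
        have hhom : (Φ.comp ρ : A' →ₐ[A] Q') = IsScalarTower.toAlgHom A A' Q' := by
          apply AdjoinRoot.algHom_ext
          show Φ (ρ r) = algebraMap A' Q' r
          rw [hρr]
          show Φ (mkf (MvPolynomial.X 0)) = algebraMap A' Q' r
          rw [hΦmk]
          exact MvPolynomial.aeval_X v 0
        have := congrArg (fun ff : A' →ₐ[A] Q' => ff a') hhom
        simp only [AlgHom.comp_apply] at this
        rw [show Φ (ρ a') = (Φ.comp ρ) a' from rfl, hhom]
        show algebraMap A' Q' a' = mk' (MvPolynomial.C a')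
        rw [halg']; rfl
      · intro i
        simp only [RingHom.comp_apply, RingHom.id_apply]
        show Φ (Ψ (mk' (MvPolynomial.X i))) = mk' (MvPolynomial.X i)
        rw [hΨmk]
        have : ψ0 (MvPolynomial.X i) = mkf (MvPolynomial.X i.succ) := by simp [ψ0]
        rw [this, hΦmk]
        exact MvPolynomial.aeval_X v i.succ
    -- bijectivity
    have hbij : Function.Bijective Φ := by
      constructor
      · exact Function.LeftInverse.injective (g := Ψ) (fun x => RingHom.congr_fun comp1 x)
      · exact Function.RightInverse.surjective (g := Ψ) (fun x => RingHom.congr_fun comp2 x)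
    let eΦ : Qf ≃ₐ[A] Q' := AlgEquiv.ofBijective Φ hbij
    -- bases
    let bA' : Module.Basis (Fin (m+1)) A A' := pb.basis.reindex (finCongr hdim)
    let btot : Module.Basis (Fin (m+1) × Fin (Nat.factorial m)) A Q' := bA'.smulTower bIH
    let e2 : (Fin (m+1) × Fin (Nat.factorial m)) ≃ Fin (Nat.factorial (m+1)) :=
      finProdFinEquiv.trans (finCongr (Nat.factorial_succ m).symm)
    exact ⟨(btot.map eΦ.symm.toLinearEquiv).reindex e2⟩

lemma vprod_coeff {n : ℕ} {k : ℕ} (hk : k ≤ n) :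
    (vprod n ℂ).coeff k = (-1) ^ (n - k) * MvPolynomial.esymm (Fin n) ℂ (n - k) := by
  have h1 : vprod n ℂ = ∏ j : Fin n, (Polynomial.X + Polynomial.C (-MvPolynomial.X j)) := by
    simp [vprod, sub_eq_add_neg]
  rw [h1]
  rw [Finset.prod_X_add_C_coeff Finset.univ (fun j => -MvPolynomial.X j)
    (by simpa using hk)]
  rw [MvPolynomial.esymm]
  simp only [Finset.card_univ, Fintype.card_fin]
  rw [Finset.mul_sum]
  apply Finset.sum_congr rfl
  intro t ht
  rw [Finset.mem_powersetCard] at ht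
  calc ∏ i ∈ t, -MvPolynomial.X i
      = ∏ i ∈ t, ((-1 : MvPolynomial (Fin n) ℂ) * MvPolynomial.X i) := by
        apply Finset.prod_congr rfl; intros; ring
    _ = (-1 : MvPolynomial (Fin n) ℂ) ^ t.card * ∏ i ∈ t, MvPolynomial.X i := by
        rw [Finset.prod_mul_distrib, Finset.prod_const]
    _ = (-1 : MvPolynomial (Fin n) ℂ) ^ (n - k) * ∏ i ∈ t, MvPolynomial.X i := by rw [ht.2]

lemma vprod_natDegree (n : ℕ) : (vprod n ℂ).natDegree = n := by
  rw [vprod, Polynomial.natDegree_prod_of_monic _ _ (fun j _ => monic_X_sub_C _)]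
  simp

lemma vprod_coeff_zero {n k : ℕ} (hk : n < k) : (vprod n ℂ).coeff k = 0 :=
  Polynomial.coeff_eq_zero_of_natDegree_lt (by rw [vprod_natDegree]; exact hk)

lemma span_esymm_eq (n : ℕ) :
    Ideal.span ((fun i => MvPolynomial.esymm (Fin n) ℂ i) '' Set.Icc 1 n)
      = Jid n ℂ (Polynomial.X ^ n) := by
  have hmap : (Polynomial.X ^ n : Polynomial ℂ).map (MvPolynomial.C (σ := Fin n)) =
      Polynomial.X ^ n := by simp
  set D := vprod n ℂ - (Polynomial.X ^ n : Polynomial ℂ).map MvPolynomial.C with hD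
  have hcoeff : ∀ k, D.coeff k =
      (vprod n ℂ).coeff k
        - (Polynomial.X ^ n : Polynomial (MvPolynomial (Fin n) ℂ)).coeff k := by
    intro k; rw [hD, Polynomial.coeff_sub, hmap]
  apply le_antisymm
  · rw [Ideal.span_le]
    rintro _ ⟨i, hi, rfl⟩
    obtain ⟨hi1, hi2⟩ := hi
    have h1 : D.coeff (n - i) = (-1) ^ i * MvPolynomial.esymm (Fin n) ℂ i := by
      rw [hcoeff, vprod_coeff (Nat.sub_le _ _), Polynomial.coeff_X_pow,
        if_neg (by omega), show n - (n - i) = i by omega]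
      ring
    have h2 : MvPolynomial.esymm (Fin n) ℂ i = (-1) ^ i * D.coeff (n - i) := by
      rw [h1, ← mul_assoc, ← mul_pow, neg_mul_neg, one_mul, one_pow, one_mul]
    show MvPolynomial.esymm (Fin n) ℂ i ∈ Jid n ℂ (Polynomial.X ^ n)
    rw [h2]
    exact Ideal.mul_mem_left _ _ (Ideal.subset_span (Set.mem_range_self _))
  · rw [Jid, Ideal.span_le]
    rintro _ ⟨k, rfl⟩
    show D.coeff k ∈ Ideal.span ((fun i => MvPolynomial.esymm (Fin n) ℂ i) '' Set.Icc 1 n)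
    rcases lt_trichotomy k n with h | h | h
    · rw [hcoeff, vprod_coeff (le_of_lt h), Polynomial.coeff_X_pow, if_neg (by omega), sub_zero]
      exact Ideal.mul_mem_left _ _
        (Ideal.subset_span ⟨n - k, ⟨by omega, by omega⟩, rfl⟩)
    · subst h
      rw [hcoeff, vprod_coeff le_rfl, Nat.sub_self, pow_zero, one_mul,
        MvPolynomial.esymm_zero, Polynomial.coeff_X_pow, if_pos rfl, sub_self]
      exact zero_mem _
    · rw [hcoeff, vprod_coeff_zero h, Polynomial.coeff_X_pow, if_neg (by omega), sub_zero]
      exact zero_mem _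

/-- The coinvariant algebra of the symmetric group `S_n`, i.e. the quotient of
`ℂ[x_1,…,x_n]` by the ideal generated by the elementary symmetric polynomials
`e_1, …, e_n`, has dimension `n!` over `ℂ`. -/
theorem coinvariant_algebra_dim_factorial (n : ℕ) :
    Module.finrank ℂ
      (MvPolynomial (Fin n) ℂ ⧸
        Ideal.span ((fun i => MvPolynomial.esymm (Fin n) ℂ i) '' Set.Icc 1 n)) = Nat.factorial n := by
  obtain ⟨b⟩ := key n ℂ (Polynomial.X ^ n) (Polynomial.monic_X_pow n) (Polynomial.natDegree_X_pow n)
  rw [span_esymm_eq n]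
  rw [Module.finrank_eq_card_basis b, Fintype.card_fin]
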